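/- arXiv:2202.00256 — 3 statements merged into one kernel-verified Lean document; each statement's English description precedes it below -/
import Mathlib

section
/- If the offspring distribution ν has mean m > 1, then the Galton–Watson process started from one individual survives with positive probability: P^1(τ = ∞) > 0. -/
open MeasureTheory ProbabilityTheory Filter
open scoped ENNReal

/-- Convolution of two measures on `ℕ`. -/
noncomputable def mconv (μ ν : Measure ℕ) : Measure ℕ :=
  Measure.map (fun p : ℕ × ℕ => p.1 + p.2) (μ.prod ν)

/-- `i`-fold convolution power of a measure on `ℕ`. -/
noncomputable def convPow (ν : Measure ℕ) : ℕ → Measure ℕ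
  | 0 => Measure.dirac 0
  | n + 1 => mconv (convPow ν n) ν

/-- Transition probabilities of a Galton–Watson chain. -/
noncomputable def gwStep (ν : Measure ℕ) (i j : ℕ) : ℝ≥0∞ :=
  if i = 0 then (if j = 0 then 1 else 0) else convPow ν i {j}

lemma dirac_nat (x y : ℕ) : (Measure.dirac x : Measure ℕ) {y} = if y = x then 1 else 0 := by
  rw [Measure.dirac_apply, Set.indicator_apply]
  by_cases h : y = x
  · simp [h]
  · simp only [h, if_false, Set.mem_singleton_iff]
    exact if_neg (fun hxy => h hxy.symm)

lemma convPow_prob (ν : Measure ℕ) [IsProbabilityMeasure ν] (i : ℕ) :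
    IsProbabilityMeasure (convPow ν i) := by
  induction i with
  | zero => rw [convPow]; infer_instance
  | succ n ih =>
    rw [convPow, mconv]
    exact Measure.isProbabilityMeasure_map (measurable_of_countable _).aemeasurable

/-- Generating function. -/
noncomputable def fgen (ν : Measure ℕ) (s : ℝ≥0∞) : ℝ≥0∞ := ∑' k, ν {k} * s ^ k

lemma gen_eq_lintegral (m : Measure ℕ) (s : ℝ≥0∞) :
    ∑' j, m {j} * s ^ j = ∫⁻ x, s ^ x ∂m := by
  rw [lintegral_countable']
  exact tsum_congr fun j => mul_comm _ _

lemma gen_mconv (μ' ν' : Measure ℕ) [SFinite μ'] [SFinite ν'] (s : ℝ≥0∞) :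
    ∑' j, mconv μ' ν' {j} * s ^ j = (∑' j, μ' {j} * s ^ j) * (∑' j, ν' {j} * s ^ j) := by
  rw [gen_eq_lintegral, gen_eq_lintegral, gen_eq_lintegral, mconv,
    lintegral_map (measurable_of_countable _) (measurable_of_countable _)]
  calc ∫⁻ p : ℕ × ℕ, s ^ (p.1 + p.2) ∂μ'.prod ν'
      = ∫⁻ p : ℕ × ℕ, s ^ p.1 * s ^ p.2 ∂μ'.prod ν' := by
        refine lintegral_congr fun p => ?_
        rw [pow_add]
    _ = _ := lintegral_prod_mul (measurable_of_countable _).aemeasurable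
        (measurable_of_countable _).aemeasurable

lemma gen_convPow (ν : Measure ℕ) [IsProbabilityMeasure ν] (i : ℕ) (s : ℝ≥0∞) :
    ∑' j, convPow ν i {j} * s ^ j = (fgen ν s) ^ i := by
  induction i with
  | zero =>
    rw [convPow, pow_zero]
    calc ∑' j, (Measure.dirac 0 : Measure ℕ) {j} * s ^ j
        = ∑' j : ℕ, (if j = 0 then s ^ j else 0) := by
          refine tsum_congr fun j => ?_
          rw [dirac_nat]
          split <;> simp
      _ = 1 := by rw [tsum_eq_single 0 (fun b hb => by simp [hb])]; simp
  | succ n ih =>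
    haveI := convPow_prob ν n
    rw [convPow, gen_mconv, ih, pow_succ]
    rfl

lemma gen_gwStep (ν : Measure ℕ) [IsProbabilityMeasure ν] (i : ℕ) (s : ℝ≥0∞) :
    ∑' j, gwStep ν i j * s ^ j = (fgen ν s) ^ i := by
  rcases Nat.eq_zero_or_pos i with h | h
  · subst h
    simp only [gwStep, if_pos rfl, pow_zero]
    calc ∑' j : ℕ, (if j = 0 then (1:ℝ≥0∞) else 0) * s ^ j
        = ∑' j : ℕ, (if j = 0 then s ^ j else 0) := by
          refine tsum_congr fun j => ?_; split <;> simp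
      _ = 1 := by rw [tsum_eq_single 0 (fun b hb => by simp [hb])]; simp
  · simp only [gwStep, if_neg h.ne']
    exact gen_convPow ν i s

/-- Marginal distribution (weights) at time `n`, started from one individual. -/
noncomputable def pdist (ν : Measure ℕ) : ℕ → ℕ → ℝ≥0∞
  | 0 => fun j => if j = 1 then 1 else 0
  | n + 1 => fun j => ∑' i, pdist ν n i * gwStep ν i j

lemma gen_pdist (ν : Measure ℕ) [IsProbabilityMeasure ν] (n : ℕ) (s : ℝ≥0∞) :
    ∑' j, pdist ν n j * s ^ j = (fgen ν)^[n] s := by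
  induction n generalizing s with
  | zero =>
    simp only [pdist, Function.iterate_zero, id_eq]
    calc ∑' j : ℕ, (if j = 1 then (1:ℝ≥0∞) else 0) * s ^ j
        = ∑' j : ℕ, (if j = 1 then s ^ j else 0) := by
          refine tsum_congr fun j => ?_; split <;> simp
      _ = s := by rw [tsum_eq_single 1 (fun b hb => by simp [hb])]; simp
  | succ n ih =>
    rw [Function.iterate_succ_apply, ← ih (fgen ν s)]
    calc ∑' j, pdist ν (n+1) j * s ^ j
        = ∑' j, ∑' i, pdist ν n i * gwStep ν i j * s ^ j := by
          refine tsum_congr fun j => ?_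
          rw [show pdist ν (n+1) j = ∑' i, pdist ν n i * gwStep ν i j from rfl,
            ENNReal.tsum_mul_right]
      _ = ∑' i, ∑' j, pdist ν n i * gwStep ν i j * s ^ j := ENNReal.tsum_comm
      _ = ∑' i, pdist ν n i * (fgen ν s) ^ i := by
          refine tsum_congr fun i => ?_
          rw [← gen_gwStep ν i s, ← ENNReal.tsum_mul_left]
          exact tsum_congr fun j => mul_assoc _ _ _
lemma tsum_nu_one (ν : Measure ℕ) [IsProbabilityMeasure ν] : ∑' k : ℕ, ν {k} = 1 := by
  have h := gen_eq_lintegral ν 1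
  simp only [one_pow, mul_one] at h
  rw [h, lintegral_one, measure_univ]

lemma fgen_mono (ν : Measure ℕ) {s t : ℝ≥0∞} (hst : s ≤ t) : fgen ν s ≤ fgen ν t :=
  ENNReal.tsum_le_tsum fun k => mul_le_mul_right (pow_le_pow_left' hst k) _

lemma geom_id {r : ℝ≥0∞} (hr : r ≤ 1) (k : ℕ) :
    (1 - r) * (∑ j ∈ Finset.range k, r ^ j) + r ^ k = 1 := by
  induction k with
  | zero => simp
  | succ n ih =>
    rw [Finset.sum_range_succ, mul_add, add_assoc]
    have : (1 - r) * r ^ n + r ^ (n + 1) = r ^ n := by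
      rw [pow_succ, mul_comm (1 - r) (r ^ n), ← mul_add, tsub_add_cancel_of_le hr, mul_one]
    rw [this, ih]

lemma fgen_le_self (ν : Measure ℕ) [IsProbabilityMeasure ν] {r : ℝ≥0∞} (hr : r ≤ 1)
    (hD : 1 ≤ ∑' k : ℕ, (k : ℝ≥0∞) * ν {k} * r ^ k) : fgen ν r ≤ r := by
  set u : ℕ → ℝ≥0∞ := fun k => (1 - r) * ∑ j ∈ Finset.range k, r ^ j with hu
  set T : ℝ≥0∞ := ∑' k, ν {k} * u k with hT
  have hsplit : fgen ν r + T = 1 := by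
    rw [fgen, hT, ← ENNReal.tsum_add]
    calc ∑' k, (ν {k} * r ^ k + ν {k} * u k)
        = ∑' k : ℕ, ν {k} := by
          refine tsum_congr fun k => ?_
          rw [← mul_add, add_comm, geom_id hr, mul_one]
      _ = 1 := tsum_nu_one ν
  have hT1 : T ≤ 1 := le_trans le_add_self hsplit.le
  have hTge : 1 - r ≤ T := by
    have h1 : ∀ k : ℕ, (1 - r) * ((k : ℝ≥0∞) * r ^ k) ≤ u k := by
      intro k
      refine mul_le_mul_right ?_ _
      calc (k : ℝ≥0∞) * r ^ k = ∑ _j ∈ Finset.range k, r ^ k := by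
            rw [Finset.sum_const, Finset.card_range, nsmul_eq_mul]
        _ ≤ ∑ j ∈ Finset.range k, r ^ j := by
            refine Finset.sum_le_sum fun j hj => ?_
            exact pow_le_pow_right_of_le_one' hr (Finset.mem_range.mp hj).le
    calc 1 - r = (1 - r) * 1 := (mul_one _).symm
      _ ≤ (1 - r) * ∑' k : ℕ, (k : ℝ≥0∞) * ν {k} * r ^ k := mul_le_mul_right hD _
      _ = ∑' k : ℕ, (1 - r) * ((k : ℝ≥0∞) * ν {k} * r ^ k) := ENNReal.tsum_mul_left.symm
      _ ≤ T := by
        refine ENNReal.tsum_le_tsum fun k => ?_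
        calc (1 - r) * ((k : ℝ≥0∞) * ν {k} * r ^ k)
            = ν {k} * ((1 - r) * ((k : ℝ≥0∞) * r ^ k)) := by ring
          _ ≤ ν {k} * u k := mul_le_mul_right (h1 k) _
  have hfr : fgen ν r = 1 - T :=
    ENNReal.eq_sub_of_add_eq (ne_top_of_le_ne_top ENNReal.one_ne_top hT1) hsplit
  rw [hfr]
  calc 1 - T ≤ 1 - (1 - r) := tsub_le_tsub_left hTge 1
    _ = r := ENNReal.sub_sub_cancel ENNReal.one_ne_top hr

lemma exists_r (ν : Measure ℕ) [IsProbabilityMeasure ν]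
    (hm : 1 < ∑' k : ℕ, (k : ℝ≥0∞) * ν {k}) :
    ∃ r : ℝ≥0∞, r < 1 ∧ fgen ν r ≤ r := by
  rw [ENNReal.tsum_eq_iSup_sum] at hm
  obtain ⟨F, hF⟩ := lt_iSup_iff.mp hm
  set mF : ℝ≥0∞ := ∑ k ∈ F, (k : ℝ≥0∞) * ν {k} with hmF
  have hmFtop : mF ≠ ∞ := by
    refine (ENNReal.sum_lt_top.mpr fun k _ => ?_).ne
    exact ENNReal.mul_lt_top (ENNReal.natCast_lt_top k) (prob_le_one.trans_lt ENNReal.one_lt_top)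
  have hmF0 : mF ≠ 0 := by
    intro h0
    rw [h0] at hF
    exact absurd hF (by simp)
  set M : ℕ := F.sup id + 1 with hM
  set r : ℝ≥0∞ := mF⁻¹ ^ ((M : ℝ)⁻¹) with hr
  have hinv1 : mF⁻¹ < 1 := ENNReal.inv_lt_one.mpr hF
  have hr1 : r < 1 := ENNReal.rpow_lt_one hinv1 (by positivity)
  have hrM : r ^ M = mF⁻¹ := by
    rw [hr, ← ENNReal.rpow_natCast (mF⁻¹ ^ ((M : ℝ)⁻¹)) M, ← ENNReal.rpow_mul,
      inv_mul_cancel₀ (Nat.cast_ne_zero.mpr (Nat.succ_ne_zero (F.sup id))), ENNReal.rpow_one]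
  refine ⟨r, hr1, fgen_le_self ν hr1.le ?_⟩
  calc (1 : ℝ≥0∞) = mF * mF⁻¹ := (ENNReal.mul_inv_cancel hmF0 hmFtop).symm
    _ = ∑ k ∈ F, (k : ℝ≥0∞) * ν {k} * r ^ M := by rw [hrM, Finset.sum_mul]
    _ ≤ ∑ k ∈ F, (k : ℝ≥0∞) * ν {k} * r ^ k := by
        refine Finset.sum_le_sum fun k hk => ?_
        refine mul_le_mul_right ?_ _
        exact pow_le_pow_right_of_le_one' hr1.le
          (le_trans (Finset.le_sup (f := id) hk) (Nat.le_succ _))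
    _ ≤ ∑' k : ℕ, (k : ℝ≥0∞) * ν {k} * r ^ k := ENNReal.sum_le_tsum F

lemma iter_le (ν : Measure ℕ) {r : ℝ≥0∞} (hfr : fgen ν r ≤ r) :
    ∀ n, (fgen ν)^[n] 0 ≤ r := by
  intro n
  induction n with
  | zero => exact zero_le
  | succ n ih =>
    rw [Function.iterate_succ_apply']
    exact le_trans (fgen_mono ν ih) hfr
/-- Extend a finite path to `ℕ → ℕ` by zero. -/
def extP {n : ℕ} (a : Fin (n + 1) → ℕ) : ℕ → ℕ :=
  fun k => if h : k < n + 1 then a ⟨k, h⟩ else 0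

/-- Weight of a finite path. -/
noncomputable def Wt (ν : Measure ℕ) (n : ℕ) (b : ℕ → ℕ) : ℝ≥0∞ :=
  (Measure.dirac 1 : Measure ℕ) {b 0} * ∏ k ∈ Finset.range n, gwStep ν (b k) (b (k + 1))

lemma extP_le {n : ℕ} (b : Fin (n + 1) → ℕ) (i : ℕ) {k : ℕ} (hk : k ≤ n) :
    extP (Fin.snoc b i : Fin (n + 2) → ℕ) k = extP b k := by
  have h1 : k < n + 2 := by omega
  have h2 : k < n + 1 := by omega
  rw [extP, extP, dif_pos h1, dif_pos h2]
  have : (⟨k, h1⟩ : Fin (n + 2)) = Fin.castSucc ⟨k, h2⟩ := rfl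
  rw [this, Fin.snoc_castSucc]

lemma extP_last {n : ℕ} (b : Fin (n + 1) → ℕ) (i : ℕ) :
    extP (Fin.snoc b i : Fin (n + 2) → ℕ) (n + 1) = i := by
  rw [extP, dif_pos (by omega : n + 1 < n + 2)]
  have : (⟨n + 1, by omega⟩ : Fin (n + 2)) = Fin.last (n + 1) := rfl
  rw [this, Fin.snoc_last]

lemma pathsum (ν : Measure ℕ) (n j : ℕ) :
    ∑' a : Fin (n + 1) → ℕ, (if extP a n = j then Wt ν n (extP a) else 0) = pdist ν n j := by
  induction n generalizing j with
  | zero =>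
    rw [← Equiv.tsum_eq (Equiv.funUnique (Fin 1) ℕ).symm
      (fun a => if extP a 0 = j then Wt ν 0 (extP a) else 0)]
    have hx : ∀ x : ℕ, extP ((Equiv.funUnique (Fin 1) ℕ).symm x) 0 = x := fun x => rfl
    calc ∑' x : ℕ, (if extP ((Equiv.funUnique (Fin 1) ℕ).symm x) 0 = j then
            Wt ν 0 (extP ((Equiv.funUnique (Fin 1) ℕ).symm x)) else 0)
        = ∑' x : ℕ, (if x = j then (if x = 1 then (1:ℝ≥0∞) else 0) else 0) := by
          refine tsum_congr fun x => ?_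
          rw [hx, Wt, Finset.range_zero, Finset.prod_empty, mul_one, hx, dirac_nat]
      _ = pdist ν 0 j := by
          rw [tsum_eq_single j (fun b hb => by simp [hb]), pdist]
          simp
  | succ n ih =>
    have key : ∀ (b : Fin (n + 1) → ℕ) (i : ℕ),
        Wt ν (n + 1) (extP (Fin.snoc b i : Fin (n + 2) → ℕ)) =
          Wt ν n (extP b) * gwStep ν (extP b n) i := by
      intro b i
      rw [Wt, Wt, Finset.prod_range_succ, extP_le b i (Nat.zero_le n), extP_last b i,
        extP_le b i (le_refl n)]
      have : ∀ k ∈ Finset.range n,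
          gwStep ν (extP (Fin.snoc b i : Fin (n + 2) → ℕ) k)
              (extP (Fin.snoc b i : Fin (n + 2) → ℕ) (k + 1)) =
            gwStep ν (extP b k) (extP b (k + 1)) := by
        intro k hk
        have hk' := Finset.mem_range.mp hk
        rw [extP_le b i (by omega), extP_le b i (by omega)]
      rw [Finset.prod_congr rfl this, mul_assoc]
    have lhs_eq : ∑' a : Fin (n + 2) → ℕ,
        (if extP a (n + 1) = j then Wt ν (n + 1) (extP a) else 0) =
        ∑' b : Fin (n + 1) → ℕ, Wt ν n (extP b) * gwStep ν (extP b n) j := by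
      rw [← Equiv.tsum_eq (Fin.snocEquiv (fun _ : Fin (n + 2) => ℕ))
        (fun a => if extP a (n + 1) = j then Wt ν (n + 1) (extP a) else 0)]
      have he : ∀ p : ℕ × (Fin (n + 1) → ℕ),
          (Fin.snocEquiv (fun _ : Fin (n + 2) => ℕ)) p = Fin.snoc p.2 p.1 := by
        intro p; funext t; rfl
      calc ∑' p : ℕ × (Fin (n + 1) → ℕ),
            (if extP ((Fin.snocEquiv (fun _ : Fin (n + 2) => ℕ)) p) (n + 1) = j then
              Wt ν (n + 1) (extP ((Fin.snocEquiv (fun _ : Fin (n + 2) => ℕ)) p)) else 0)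
          = ∑' (i : ℕ) (b : Fin (n + 1) → ℕ),
              (if i = j then Wt ν n (extP b) * gwStep ν (extP b n) i else 0) := by
            rw [ENNReal.tsum_prod']
            refine tsum_congr fun i => tsum_congr fun b => ?_
            rw [he (i, b), extP_last b i, key b i]
        _ = ∑' b : Fin (n + 1) → ℕ, Wt ν n (extP b) * gwStep ν (extP b n) j := by
            rw [tsum_eq_single j (fun i hi => by simp [hi])]
            simp
    rw [lhs_eq]
    show _ = ∑' i, pdist ν n i * gwStep ν i j
    calc ∑' b : Fin (n + 1) → ℕ, Wt ν n (extP b) * gwStep ν (extP b n) j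
        = ∑' (b : Fin (n + 1) → ℕ) (i : ℕ),
            (if extP b n = i then Wt ν n (extP b) else 0) * gwStep ν i j := by
          refine tsum_congr fun b => ?_
          rw [tsum_eq_single (extP b n) (fun i hi => by rw [if_neg (fun h => hi h.symm), zero_mul]),
            if_pos rfl]
      _ = ∑' (i : ℕ) (b : Fin (n + 1) → ℕ),
            (if extP b n = i then Wt ν n (extP b) else 0) * gwStep ν i j := ENNReal.tsum_comm
      _ = ∑' i, pdist ν n i * gwStep ν i j := by
          refine tsum_congr fun i => ?_
          rw [← ih i, ENNReal.tsum_mul_right]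
lemma Wt_absorb (ν : Measure ℕ) {n k : ℕ} {b : ℕ → ℕ} (hkn : k < n) (hk : b k = 0)
    (hn : b n ≠ 0) : Wt ν n b = 0 := by
  have hex : ∃ t, b (k + t) ≠ 0 := ⟨n - k, by rwa [Nat.add_sub_cancel' hkn.le]⟩
  have h0 : b (k + Nat.find hex) ≠ 0 := Nat.find_spec hex
  have hpos : Nat.find hex ≠ 0 := by
    intro h
    rw [h, Nat.add_zero] at h0
    exact h0 hk
  have hprev : b (k + (Nat.find hex - 1)) = 0 := by
    have := Nat.find_min hex (m := Nat.find hex - 1) (by omega)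
    exact not_not.mp this
  have hle : Nat.find hex ≤ n - k :=
    Nat.find_min' hex (by rwa [Nat.add_sub_cancel' hkn.le])
  set j := k + (Nat.find hex - 1) with hj
  have hj1 : j + 1 = k + Nat.find hex := by omega
  have hjn : j < n := by omega
  have hfac : gwStep ν (b j) (b (j + 1)) = 0 := by
    rw [hprev, hj1, gwStep, if_pos rfl, if_neg h0]
  rw [Wt, Finset.prod_eq_zero (Finset.mem_range.mpr hjn) hfac, mul_zero]

/-- `(Y n)` is a Galton–Watson process under `P` with offspring distribution `ν`
and initial distribution `μ0`, characterized by its finite-dimensional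
distributions. -/
def IsGW {Ω : Type*} [MeasurableSpace Ω] (P : Measure Ω)
    (Y : ℕ → Ω → ℕ) (ν μ0 : Measure ℕ) : Prop :=
  Measure.map (Y 0) P = μ0 ∧
  ∀ n : ℕ, ∀ a : ℕ → ℕ,
    P {ω | ∀ k ≤ n, Y k ω = a k} =
      μ0 {a 0} * ∏ k ∈ Finset.range n, gwStep ν (a k) (a (k + 1))

/-- If the fertility `m` exceeds `1`, the Galton–Watson process started from one
individual survives with positive probability. -/
theorem gw_supercritical_survival {Ω : Type*} [MeasurableSpace Ω]
    (P : Measure Ω) [IsProbabilityMeasure P]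
    (ν : Measure ℕ) [IsProbabilityMeasure ν]
    (Y : ℕ → Ω → ℕ) (hY : IsGW P Y ν (Measure.dirac 1))
    (hm : 1 < ∑' k : ℕ, (k : ℝ≥0∞) * ν {k}) :
    0 < P {ω | ∀ t : ℕ, Y t ω ≠ 0} := by
  obtain ⟨r, hr1, hfr⟩ := exists_r ν hm
  have hpath : ∀ (n : ℕ) (b : ℕ → ℕ), P {ω | ∀ k ≤ n, Y k ω = b k} = Wt ν n b :=
    fun n b => hY.2 n b
  set A : ℕ → Set Ω := fun n => {ω | Y n ω = 0} with hA
  have hAn : ∀ n, P (A n) ≤ pdist ν n 0 := by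
    intro n
    have hsub : A n ⊆ ⋃ a : Fin (n + 1) → ℕ,
        {ω | extP a n = 0 ∧ ∀ k ≤ n, Y k ω = extP a k} := by
      intro ω hω
      refine Set.mem_iUnion.mpr ⟨fun k => Y k ω, ?_, fun k hk => ?_⟩
      · simp only [extP]
        rw [dif_pos (by omega : n < n + 1)]
        exact hω
      · simp only [extP]
        rw [dif_pos (by omega : k < n + 1)]
    refine le_trans (measure_mono hsub) (le_trans (measure_iUnion_le _) ?_)
    rw [← pathsum ν n 0]
    refine ENNReal.tsum_le_tsum fun a => ?_
    by_cases h : extP a n = 0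
    · rw [if_pos h, ← hpath n (extP a)]
      exact measure_mono fun ω hω => hω.2
    · rw [if_neg h]
      have : {ω | extP a n = 0 ∧ ∀ k ≤ n, Y k ω = extP a k} = ∅ := by
        ext ω
        simp only [Set.mem_setOf_eq, Set.mem_empty_iff_false, iff_false]
        exact fun hc => h hc.1
      rw [this, measure_empty]
  have habs : ∀ k n : ℕ, k < n → P {ω | Y k ω = 0 ∧ Y n ω ≠ 0} = 0 := by
    intro k n hkn
    refine le_antisymm ?_ (zero_le)
    have hsub : {ω | Y k ω = 0 ∧ Y n ω ≠ 0} ⊆ ⋃ a : Fin (n + 1) → ℕ,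
        {ω | (extP a k = 0 ∧ extP a n ≠ 0) ∧ ∀ t ≤ n, Y t ω = extP a t} := by
      intro ω hω
      refine Set.mem_iUnion.mpr ⟨fun t => Y t ω, ⟨?_, ?_⟩, fun t ht => ?_⟩
      · simp only [extP]
        rw [dif_pos (by omega : k < n + 1)]
        exact hω.1
      · simp only [extP]
        rw [dif_pos (by omega : n < n + 1)]
        exact hω.2
      · simp only [extP]
        rw [dif_pos (by omega : t < n + 1)]
    refine le_trans (measure_mono hsub) (le_trans (measure_iUnion_le _) ?_)
    have hzero : ∀ a : Fin (n + 1) → ℕ,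
        P {ω | (extP a k = 0 ∧ extP a n ≠ 0) ∧ ∀ t ≤ n, Y t ω = extP a t} = 0 := by
      intro a
      by_cases h : extP a k = 0 ∧ extP a n ≠ 0
      · refine le_antisymm ?_ (zero_le)
        have hW : Wt ν n (extP a) = 0 := Wt_absorb ν hkn h.1 h.2
        rw [← hW, ← hpath n (extP a)]
        exact measure_mono fun ω hω => hω.2
      · have : {ω | (extP a k = 0 ∧ extP a n ≠ 0) ∧ ∀ t ≤ n, Y t ω = extP a t} = ∅ := by
          ext ω
          simp only [Set.mem_setOf_eq, Set.mem_empty_iff_false, iff_false]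
          exact fun hc => h hc.1
        rw [this, measure_empty]
    have : ∑' a : Fin (n + 1) → ℕ,
        P {ω | (extP a k = 0 ∧ extP a n ≠ 0) ∧ ∀ t ≤ n, Y t ω = extP a t} = 0 := by
      simp only [hzero]
      exact tsum_zero
    rw [this]
  have hB : ∀ n, P (Set.accumulate A n) ≤ r := by
    intro n
    have hsub : Set.accumulate A n ⊆
        A n ∪ ⋃ k ∈ Finset.range n, {ω | Y k ω = 0 ∧ Y n ω ≠ 0} := by
      intro ω hω
      obtain ⟨k, hk, hωk⟩ := Set.mem_accumulate.mp hω
      by_cases hn : Y n ω = 0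
      · exact Or.inl hn
      · have hklt : k < n := by
          rcases lt_or_eq_of_le hk with h | h
          · exact h
          · exact absurd (h ▸ hωk) hn
        exact Or.inr (Set.mem_iUnion₂.mpr ⟨k, Finset.mem_range.mpr hklt, ⟨hωk, hn⟩⟩)
    calc P (Set.accumulate A n)
        ≤ P (A n ∪ ⋃ k ∈ Finset.range n, {ω | Y k ω = 0 ∧ Y n ω ≠ 0}) := measure_mono hsub
      _ ≤ P (A n) + P (⋃ k ∈ Finset.range n, {ω | Y k ω = 0 ∧ Y n ω ≠ 0}) :=
          measure_union_le _ _
      _ ≤ pdist ν n 0 + 0 := by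
          refine add_le_add (hAn n) ?_
          refine le_trans (measure_biUnion_finset_le _ _) ?_
          exact le_of_eq (Finset.sum_eq_zero fun k hk => habs k n (Finset.mem_range.mp hk))
      _ ≤ r := by
          rw [add_zero]
          refine le_trans ?_ (iter_le ν hfr n)
          calc pdist ν n 0 = pdist ν n 0 * (0:ℝ≥0∞) ^ (0:ℕ) := by rw [pow_zero, mul_one]
            _ ≤ ∑' i, pdist ν n i * (0:ℝ≥0∞) ^ i := ENNReal.le_tsum 0
            _ = (fgen ν)^[n] 0 := gen_pdist ν n 0
  have hcompl : P {ω | ∀ t : ℕ, Y t ω ≠ 0}ᶜ ≤ r := by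
    have hU : {ω | ∀ t : ℕ, Y t ω ≠ 0}ᶜ = ⋃ n, A n := by
      ext ω
      simp only [Set.mem_compl_iff, Set.mem_setOf_eq, Set.mem_iUnion, not_forall, not_not, hA]
    rw [hU, measure_iUnion_eq_iSup_accumulate]
    exact iSup_le hB
  by_contra hP
  push_neg at hP
  have h0 : P {ω | ∀ t : ℕ, Y t ω ≠ 0} = 0 := le_antisymm hP (zero_le)
  have h1 : (1 : ℝ≥0∞) ≤ r := by
    have hu := measure_union_le (μ := P) {ω | ∀ t : ℕ, Y t ω ≠ 0} {ω | ∀ t : ℕ, Y t ω ≠ 0}ᶜ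
    rw [Set.union_compl_self, measure_univ, h0, zero_add] at hu
    exact hu.trans hcompl
  exact absurd hr1 (not_lt.mpr h1)
end

section
/- For a Galton–Watson process with offspring distribution ν and any a > 0 and N ≥ 1: if a · P^N(Y_1 ≥ aN) > 1, then the process started from one individual survives with positive probability. -/
open MeasureTheory ProbabilityTheory Filter
open scoped ENNReal Topology

-- pgf
noncomputable def pgf (μ : Measure ℕ) (s : ℝ≥0∞) : ℝ≥0∞ := ∫⁻ k, s ^ k ∂μ

lemma pgf_eq_tsum (μ : Measure ℕ) (s : ℝ≥0∞) : pgf μ s = ∑' k, μ {k} * s ^ k := by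
  rw [pgf, lintegral_countable']
  exact tsum_congr fun k => mul_comm _ _

lemma tsum_singleton_eq (μ : Measure ℕ) : ∑' k, μ {k} = μ Set.univ := by
  have := lintegral_countable' (fun _ : ℕ => (1:ℝ≥0∞)) (μ := μ)
  simpa using this.symm

instance mconv_prob (μ ν : Measure ℕ) [IsProbabilityMeasure μ] [IsProbabilityMeasure ν] :
    IsProbabilityMeasure (mconv μ ν) := by
  constructor
  rw [mconv, Measure.map_apply (measurable_of_countable _) MeasurableSet.univ]
  simp

instance convPow_prob_s7 (ν : Measure ℕ) [IsProbabilityMeasure ν] (n : ℕ) :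
    IsProbabilityMeasure (convPow ν n) := by
  induction n with
  | zero => exact ⟨by simp [convPow]⟩
  | succ n ih => rw [convPow]; infer_instance

lemma pgf_mconv (μ ν : Measure ℕ) [IsProbabilityMeasure μ] [IsProbabilityMeasure ν]
    (s : ℝ≥0∞) : pgf (mconv μ ν) s = pgf μ s * pgf ν s := by
  rw [pgf, mconv, lintegral_map (measurable_of_countable _) (measurable_of_countable _)]
  rw [lintegral_prod _ (measurable_of_countable _).aemeasurable]
  simp_rw [pow_add]
  have : ∀ x:ℕ, ∫⁻ y, s ^ x * s ^ y ∂ν = s ^ x * pgf ν s := fun x =>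
    lintegral_const_mul _ (measurable_of_countable _)
  simp_rw [this]
  exact lintegral_mul_const _ (measurable_of_countable _)

lemma pgf_convPow (ν : Measure ℕ) [IsProbabilityMeasure ν] (n : ℕ) (s : ℝ≥0∞) :
    pgf (convPow ν n) s = (pgf ν s) ^ n := by
  induction n with
  | zero => simp [convPow, pgf, lintegral_dirac]
  | succ n ih => rw [convPow, pgf_mconv, ih, pow_succ]

lemma pgf_mono (μ : Measure ℕ) {s t : ℝ≥0∞} (hst : s ≤ t) : pgf μ s ≤ pgf μ t := by
  rw [pgf_eq_tsum, pgf_eq_tsum]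
  exact ENNReal.tsum_le_tsum fun k => mul_le_mul_right (pow_le_pow_left' hst k) _

/-- extend `(i, b)` to a path `ℕ → ℕ`. -/
def pathExt (i : ℕ) {n : ℕ} (b : Fin n → ℕ) : ℕ → ℕ := fun k =>
  if k = 0 then i else if h2 : k - 1 < n then b ⟨k - 1, h2⟩ else 0

lemma pathExt_zero (i : ℕ) {n : ℕ} (b : Fin n → ℕ) : pathExt i b 0 = i := rfl

lemma pathExt_cons (i j : ℕ) {n : ℕ} (b : Fin n → ℕ) {k : ℕ} (hk : k ≤ n) :
    pathExt i (Fin.cons j b) (k + 1) = pathExt j b k := by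
  rcases Nat.eq_zero_or_pos k with rfl | hk0
  · simp [pathExt]
  · have h1 : k - 1 < n := by omega
    have h2 : k < n + 1 := by omega
    simp only [pathExt, Nat.add_sub_cancel, if_neg (Nat.succ_ne_zero k),
      if_neg (Nat.pos_iff_ne_zero.mp hk0), dif_pos h1, dif_pos h2]
    have : (⟨k, h2⟩ : Fin (n+1)) = Fin.succ ⟨k - 1, h1⟩ := by
      ext; simp; omega
    rw [this, Fin.cons_succ]

/-- iterates of the pgf starting at 0 -/
noncomputable def qseq (ν : Measure ℕ) : ℕ → ℝ≥0∞
  | 0 => 0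
  | n + 1 => pgf ν (qseq ν n)

/-- total weight of length-`n` paths from `i` ending at `0`. -/
noncomputable def Tsum (ν : Measure ℕ) (n i : ℕ) : ℝ≥0∞ :=
  ∑' b : Fin n → ℕ, (if pathExt i b n = 0 then 1 else 0) *
    ∏ k ∈ Finset.range n, gwStep ν (pathExt i b k) (pathExt i b (k+1))

lemma Tsum_eq (ν : Measure ℕ) [IsProbabilityMeasure ν] (n : ℕ) :
    ∀ i, Tsum ν n i = (qseq ν n) ^ i := by
  induction n with
  | zero =>
    intro i
    rw [Tsum, tsum_eq_single (fun x => x.elim0)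
      (fun b hb => absurd (Subsingleton.elim b _) hb)]
    rcases Nat.eq_zero_or_pos i with rfl | hi
    · simp [pathExt_zero, qseq]
    · simp [pathExt_zero, qseq, Nat.pos_iff_ne_zero.mp hi, zero_pow (Nat.pos_iff_ne_zero.mp hi)]
  | succ n ih =>
    intro i
    have key : Tsum ν (n+1) i = ∑' j, (qseq ν n) ^ j * gwStep ν i j := by
      rw [Tsum, ← Equiv.tsum_eq (Fin.consEquiv (fun _ : Fin (n+1) => ℕ)), ENNReal.tsum_prod']
      refine tsum_congr fun j => ?_
      have inner : ∀ b : Fin n → ℕ,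
          (if pathExt i (Fin.cons j b) (n+1) = 0 then (1:ℝ≥0∞) else 0) *
            ∏ k ∈ Finset.range (n+1),
              gwStep ν (pathExt i (Fin.cons j b) k) (pathExt i (Fin.cons j b) (k+1)) =
          ((if pathExt j b n = 0 then 1 else 0) *
            ∏ k ∈ Finset.range n, gwStep ν (pathExt j b k) (pathExt j b (k+1))) * gwStep ν i j := by
        intro b
        rw [Finset.prod_range_succ' (fun k =>
          gwStep ν (pathExt i (Fin.cons j b) k) (pathExt i (Fin.cons j b) (k+1))) n]
        rw [pathExt_cons i j b (le_refl n), pathExt_zero,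
          pathExt_cons i j b (Nat.zero_le n), pathExt_zero]
        have hprod : ∀ k ∈ Finset.range n,
            gwStep ν (pathExt i (Fin.cons j b) (k+1)) (pathExt i (Fin.cons j b) (k+1+1)) =
            gwStep ν (pathExt j b k) (pathExt j b (k+1)) := by
          intro k hk
          rw [Finset.mem_range] at hk
          rw [pathExt_cons i j b (le_of_lt hk), pathExt_cons i j b hk]
        rw [Finset.prod_congr rfl hprod]
        ring
      show (∑' b : Fin n → ℕ, _) = _
      calc ∑' b : Fin n → ℕ,
          (if pathExt i ((Fin.consEquiv (fun _ : Fin (n+1) => ℕ)) (j, b)) (n+1) = 0 then (1:ℝ≥0∞) else 0) *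
            ∏ k ∈ Finset.range (n+1),
              gwStep ν (pathExt i ((Fin.consEquiv (fun _ : Fin (n+1) => ℕ)) (j, b)) k)
                (pathExt i ((Fin.consEquiv (fun _ : Fin (n+1) => ℕ)) (j, b)) (k+1))
          = ∑' b : Fin n → ℕ,
            ((if pathExt j b n = 0 then (1:ℝ≥0∞) else 0) *
              ∏ k ∈ Finset.range n, gwStep ν (pathExt j b k) (pathExt j b (k+1))) * gwStep ν i j := by
            exact tsum_congr fun b => inner b
        _ = Tsum ν n j * gwStep ν i j := by rw [ENNReal.tsum_mul_right]; rfl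
        _ = (qseq ν n) ^ j * gwStep ν i j := by rw [ih]
    rw [key]
    rcases Nat.eq_zero_or_pos i with rfl | hi
    · rw [tsum_eq_single 0 ?h]
      · simp [gwStep]
      · intro j hj; simp [gwStep, hj]
    · have hi' : i ≠ 0 := Nat.pos_iff_ne_zero.mp hi
      have : ∀ j, (qseq ν n) ^ j * gwStep ν i j = convPow ν i {j} * (qseq ν n) ^ j := by
        intro j; rw [gwStep, if_neg hi', mul_comm]
      rw [tsum_congr this, ← pgf_eq_tsum, pgf_convPow]
      rfl

lemma zero_weight (ν : Measure ℕ) (a : ℕ → ℕ) :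
    ∀ t s, s ≤ t → a s = 0 → a t ≠ 0 →
      ∏ k ∈ Finset.range t, gwStep ν (a k) (a (k+1)) = 0 := by
  intro t
  induction t with
  | zero => intro s hs h0 ht; interval_cases s; exact absurd h0 ht
  | succ t ih =>
    intro s hs h0 ht
    rcases Nat.lt_or_ge s (t+1) with hst | hst
    · have hs' : s ≤ t := by omega
      rw [Finset.prod_range_succ]
      by_cases hat : a t = 0
      · rw [show gwStep ν (a t) (a (t+1)) = 0 by simp [gwStep, hat, ht]]
        simp
      · rw [ih s hs' h0 hat, zero_mul]
    · have : s = t + 1 := by omega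
      exact absurd (this ▸ h0) ht

lemma hit_zero_bound {Ω' : Type*} [MeasurableSpace Ω'] (P' : Measure Ω')
    (Y' : ℕ → Ω' → ℕ) (ν : Measure ℕ) [IsProbabilityMeasure ν]
    (hY' : IsGW P' Y' ν (Measure.dirac 1)) (t : ℕ) :
    P' {ω | ∃ s ≤ t, Y' s ω = 0} ≤ qseq ν t := by
  classical
  set D : ℕ × (Fin t → ℕ) → Set Ω' := fun p =>
    {ω | (∃ s ≤ t, pathExt p.1 p.2 s = 0) ∧ ∀ k ≤ t, Y' k ω = pathExt p.1 p.2 k} with hD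
  have hsub : {ω | ∃ s ≤ t, Y' s ω = 0} ⊆ ⋃ p, D p := by
    intro ω hω
    obtain ⟨s, hs, hs0⟩ := hω
    refine Set.mem_iUnion.mpr ⟨⟨Y' 0 ω, fun k => Y' (k+1) ω⟩, ?_, ?_⟩
    · refine ⟨s, hs, ?_⟩
      rcases Nat.eq_zero_or_pos s with rfl | hsp
      · exact hs0
      · have h1 : s - 1 < t := by omega
        simp only [pathExt, if_neg (Nat.pos_iff_ne_zero.mp hsp), dif_pos h1]
        rw [show s - 1 + 1 = s by omega]; exact hs0
    · intro k hk
      rcases Nat.eq_zero_or_pos k with rfl | hkp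
      · rfl
      · have h1 : k - 1 < t := by omega
        simp only [pathExt, if_neg (Nat.pos_iff_ne_zero.mp hkp), dif_pos h1]
        rw [show k - 1 + 1 = k by omega]
  have hbound : ∀ p : ℕ × (Fin t → ℕ), P' (D p) ≤
      (if (∃ s ≤ t, pathExt p.1 p.2 s = 0) then (1:ℝ≥0∞) else 0) *
        ((Measure.dirac 1 : Measure ℕ) {pathExt p.1 p.2 0} *
          ∏ k ∈ Finset.range t, gwStep ν (pathExt p.1 p.2 k) (pathExt p.1 p.2 (k+1))) := by
    intro p
    by_cases hc : ∃ s ≤ t, pathExt p.1 p.2 s = 0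
    · rw [if_pos hc, one_mul, ← hY'.2 t (pathExt p.1 p.2)]
      exact measure_mono fun ω hω => hω.2
    · rw [if_neg hc, zero_mul]
      have : D p = ∅ := by
        ext ω; simp only [hD, Set.mem_setOf_eq, Set.mem_empty_iff_false, iff_false]
        exact fun hω => hc hω.1
      rw [this, measure_empty]
  calc P' {ω | ∃ s ≤ t, Y' s ω = 0} ≤ P' (⋃ p, D p) := measure_mono hsub
    _ ≤ ∑' p, P' (D p) := measure_iUnion_le _
    _ ≤ ∑' p : ℕ × (Fin t → ℕ),
        (if (∃ s ≤ t, pathExt p.1 p.2 s = 0) then (1:ℝ≥0∞) else 0) *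
          ((Measure.dirac 1 : Measure ℕ) {pathExt p.1 p.2 0} *
            ∏ k ∈ Finset.range t, gwStep ν (pathExt p.1 p.2 k) (pathExt p.1 p.2 (k+1))) :=
      ENNReal.tsum_le_tsum hbound
    _ = ∑' (i : ℕ) (b : Fin t → ℕ),
        (if (∃ s ≤ t, pathExt i b s = 0) then (1:ℝ≥0∞) else 0) *
          ((Measure.dirac 1 : Measure ℕ) {pathExt i b 0} *
            ∏ k ∈ Finset.range t, gwStep ν (pathExt i b k) (pathExt i b (k+1))) :=
      ENNReal.tsum_prod'
    _ ≤ qseq ν t := by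
      have hcollapse : ∀ i : ℕ, i ≠ 1 → (∑' b : Fin t → ℕ,
          (if (∃ s ≤ t, pathExt i b s = 0) then (1:ℝ≥0∞) else 0) *
            ((Measure.dirac 1 : Measure ℕ) {pathExt i b 0} *
              ∏ k ∈ Finset.range t, gwStep ν (pathExt i b k) (pathExt i b (k+1)))) = 0 := by
        intro i hi
        have : ((Measure.dirac 1 : Measure ℕ) {i}) = 0 := by
          rw [Measure.dirac_apply]
          simp [Set.indicator, Ne.symm hi]
        simp only [pathExt_zero, this, zero_mul, mul_zero, tsum_zero]
      rw [tsum_eq_single 1 hcollapse]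
      have h1 : ((Measure.dirac 1 : Measure ℕ) {(1:ℕ)}) = 1 := by
        rw [Measure.dirac_apply]; simp
      simp only [pathExt_zero, h1, one_mul]
      have hle : ∀ b : Fin t → ℕ,
          (if (∃ s ≤ t, pathExt 1 b s = 0) then (1:ℝ≥0∞) else 0) *
            ∏ k ∈ Finset.range t, gwStep ν (pathExt 1 b k) (pathExt 1 b (k+1)) ≤
          (if pathExt 1 b t = 0 then (1:ℝ≥0∞) else 0) *
            ∏ k ∈ Finset.range t, gwStep ν (pathExt 1 b k) (pathExt 1 b (k+1)) := by
        intro b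
        by_cases hbt : pathExt 1 b t = 0
        · rw [if_pos hbt, one_mul]
          exact mul_le_of_le_one_left (zero_le) (by split <;> simp)
        · by_cases hc : ∃ s ≤ t, pathExt 1 b s = 0
          · obtain ⟨s, hs, hs0⟩ := hc
            rw [zero_weight ν (pathExt 1 b) t s hs hs0 hbt]
            simp
          · rw [if_neg hc, zero_mul]; exact zero_le
      calc (∑' b : Fin t → ℕ, _) ≤ Tsum ν t 1 := ENNReal.tsum_le_tsum hle
        _ = qseq ν t := by rw [Tsum_eq]; exact pow_one _

lemma pgf_trunc (μ : Measure ℕ) [IsProbabilityMeasure μ] (M : ℕ) {s : ℝ≥0∞} (hs : s ≤ 1) :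
    pgf μ s ≤ (1 - ∑' j, if M ≤ j then μ {j} else 0) +
      (∑' j, if M ≤ j then μ {j} else 0) * s ^ M := by
  classical
  set pp : ℝ≥0∞ := ∑' j, if M ≤ j then μ {j} else 0 with hpp
  have hsplit : pgf μ s = (∑' j, if M ≤ j then (0:ℝ≥0∞) else μ {j} * s ^ j) +
      ∑' j, if M ≤ j then μ {j} * s ^ j else 0 := by
    rw [pgf_eq_tsum, ← ENNReal.tsum_add]
    refine tsum_congr fun j => ?_
    by_cases hj : M ≤ j <;> simp [hj]
  have hA : (∑' j, if M ≤ j then (0:ℝ≥0∞) else μ {j} * s ^ j) ≤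
      ∑' j, if M ≤ j then (0:ℝ≥0∞) else μ {j} := by
    refine ENNReal.tsum_le_tsum fun j => ?_
    by_cases hj : M ≤ j
    · simp [hj]
    · simp only [if_neg hj]
      exact mul_le_of_le_one_right (zero_le) (pow_le_one' hs j)
  have hA' : (∑' j, if M ≤ j then (0:ℝ≥0∞) else μ {j}) + pp = 1 := by
    rw [← ENNReal.tsum_add]
    have : ∀ j : ℕ, ((if M ≤ j then (0:ℝ≥0∞) else μ {j}) + if M ≤ j then μ {j} else 0) = μ {j} := by
      intro j; by_cases hj : M ≤ j <;> simp [hj]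
    rw [tsum_congr this, tsum_singleton_eq, measure_univ]
  have hppfin : pp ≤ 1 := by
    rw [← hA']; exact le_add_self
  have hA'' : (∑' j, if M ≤ j then (0:ℝ≥0∞) else μ {j}) = 1 - pp :=
    ENNReal.eq_sub_of_add_eq (lt_of_le_of_lt hppfin ENNReal.one_lt_top).ne hA'
  have hB : (∑' j, if M ≤ j then μ {j} * s ^ j else 0) ≤ pp * s ^ M := by
    rw [hpp, ← ENNReal.tsum_mul_right]
    refine ENNReal.tsum_le_tsum fun j => ?_
    by_cases hj : M ≤ j
    · simp only [if_pos hj]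
      exact mul_le_mul_right (pow_le_pow_right_of_le_one' hs hj) _
    · simp [hj]
  calc pgf μ s = _ := hsplit
    _ ≤ (1 - pp) + pp * s ^ M := add_le_add (hA.trans hA''.le) hB

lemma exists_subfixed (ν : Measure ℕ) [IsProbabilityMeasure ν] (N M : ℕ)
    (hN : 1 ≤ N) (pp : ℝ≥0∞) (hpp1 : pp ≤ 1)
    (hbound : ∀ s : ℝ≥0∞, s ≤ 1 → (pgf ν s) ^ N ≤ (1 - pp) + pp * s ^ M)
    (hNp : (N : ℝ) < pp.toReal * M) :
    ∃ s₀ : ℝ≥0∞, s₀ < 1 ∧ pgf ν s₀ ≤ s₀ := by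
  set pr : ℝ := pp.toReal with hpr
  have hppfin : pp ≠ ⊤ := (lt_of_le_of_lt hpp1 ENNReal.one_lt_top).ne
  have hpr0 : 0 ≤ pr := ENNReal.toReal_nonneg
  have hpr1 : pr ≤ 1 := by
    rw [hpr, ← ENNReal.toReal_one]; exact ENNReal.toReal_mono ENNReal.one_ne_top hpp1
  -- find x ∈ (0,1) with pr * ∑_{k<M} x^k ≥ ∑_{k<N} x^k
  set f : ℝ → ℝ := fun x => pr * ∑ k ∈ Finset.range M, x ^ k - ∑ k ∈ Finset.range N, x ^ k with hf
  have hfc : Continuous f := by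
    apply Continuous.sub
    · exact continuous_const.mul (continuous_finset_sum _ fun k _ => continuous_pow k)
    · exact continuous_finset_sum _ fun k _ => continuous_pow k
  have hsum : ∀ n : ℕ, ∑ k ∈ Finset.range n, (1:ℝ) ^ k = n := fun n => by simp
  have hf1 : 0 < f 1 := by
    simp only [hf, hsum]; linarith
  have hopen : {x : ℝ | 0 < f x} ∈ 𝓝 (1:ℝ) :=
    (isOpen_lt continuous_const hfc).mem_nhds hf1
  have hev : ∀ᶠ x in 𝓝[<] (1:ℝ), 0 < f x ∧ 0 < x := by
    filter_upwards [nhdsWithin_le_nhds hopen,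
      nhdsWithin_le_nhds (eventually_gt_nhds (by norm_num : (0:ℝ) < 1))] with x h1 h2
    exact ⟨h1, h2⟩
  obtain ⟨x, ⟨hfx', hx0'⟩, hx1⟩ := (hev.and self_mem_nhdsWithin).exists
  have hx1 : x < 1 := hx1
  have hfx2 : 0 < pr * (∑ k ∈ Finset.range M, x ^ k) - ∑ k ∈ Finset.range N, x ^ k := hfx'
  -- real inequality
  have hgeomM : (∑ k ∈ Finset.range M, x ^ k) * (1 - x) = 1 - x ^ M := by
    have := geom_sum_mul x M; linear_combination -this
  have hgeomN : (∑ k ∈ Finset.range N, x ^ k) * (1 - x) = 1 - x ^ N := by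
    have := geom_sum_mul x N; linear_combination -this
  have hkey : 1 - pr + pr * x ^ M ≤ x ^ N := by
    have hmul : (∑ k ∈ Finset.range N, x ^ k) * (1 - x) ≤
        (pr * ∑ k ∈ Finset.range M, x ^ k) * (1 - x) := by
      apply mul_le_mul_of_nonneg_right (by linarith [hfx2]) (by linarith)
    rw [hgeomN, mul_assoc, hgeomM] at hmul
    linarith
  refine ⟨ENNReal.ofReal x, ?_, ?_⟩
  · exact ENNReal.ofReal_lt_one.mpr hx1
  · have hs1 : ENNReal.ofReal x ≤ 1 := ENNReal.ofReal_le_one.mpr hx1.le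
    have h1 := hbound (ENNReal.ofReal x) hs1
    have hrhs : (1 - pp) + pp * (ENNReal.ofReal x) ^ M ≤ (ENNReal.ofReal x) ^ N := by
      have e1 : (1:ℝ≥0∞) - pp = ENNReal.ofReal (1 - pr) := by
        rw [ENNReal.ofReal_sub _ hpr0, ENNReal.ofReal_one, hpr, ENNReal.ofReal_toReal hppfin]
      have e2 : pp * (ENNReal.ofReal x) ^ M = ENNReal.ofReal (pr * x ^ M) := by
        rw [ENNReal.ofReal_mul hpr0, ← ENNReal.ofReal_pow hx0'.le, hpr,
          ENNReal.ofReal_toReal hppfin]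
      rw [e1, e2, ← ENNReal.ofReal_add (by linarith) (by positivity), ← ENNReal.ofReal_pow hx0'.le]
      exact ENNReal.ofReal_le_ofReal hkey
    have hfin := h1.trans hrhs
    by_contra hcon
    push_neg at hcon
    have : (ENNReal.ofReal x) ^ N < (pgf ν ((ENNReal.ofReal x))) ^ N :=
      ENNReal.pow_lt_pow_left (by omega) hcon
    exact absurd hfin (not_le.mpr this)

lemma qseq_le_subfixed (ν : Measure ℕ) {s₀ : ℝ≥0∞} (h0 : pgf ν s₀ ≤ s₀) :
    ∀ n, qseq ν n ≤ s₀ := by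
  intro n
  induction n with
  | zero => exact zero_le
  | succ n ih => exact (pgf_mono ν ih).trans h0

lemma event_bound {Ω : Type*} [MeasurableSpace Ω] (P : Measure Ω) (YN : ℕ → Ω → ℕ)
    (ν : Measure ℕ) [IsProbabilityMeasure ν] (N : ℕ) (hN : 1 ≤ N)
    (hYN : IsGW P YN ν (Measure.dirac N)) (r : ℝ) :
    P {ω | r ≤ (YN 1 ω : ℝ)} ≤ ∑' j, if ⌈r⌉₊ ≤ j then convPow ν N {j} else 0 := by
  classical
  set M := ⌈r⌉₊ with hM
  set C : ℕ × ℕ → Set Ω := fun p =>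
    {ω | M ≤ p.2 ∧ ∀ k ≤ 1, YN k ω = (fun k => if k = 0 then p.1 else p.2) k} with hC
  have hsub : {ω | r ≤ (YN 1 ω : ℝ)} ⊆ ⋃ p, C p := by
    intro ω hω
    refine Set.mem_iUnion.mpr ⟨⟨YN 0 ω, YN 1 ω⟩, Nat.ceil_le.mpr hω, ?_⟩
    intro k hk; interval_cases k <;> simp
  have hCb : ∀ p : ℕ × ℕ, P (C p) ≤
      (if M ≤ p.2 then (1:ℝ≥0∞) else 0) *
        ((Measure.dirac (N:ℕ) : Measure ℕ) {p.1} * gwStep ν p.1 p.2) := by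
    intro p
    by_cases hp : M ≤ p.2
    · rw [if_pos hp, one_mul]
      have := hYN.2 1 (fun k => if k = 0 then p.1 else p.2)
      have ha0 : (fun k => if k = 0 then p.1 else p.2) 0 = p.1 := rfl
      have ha1 : (fun k => if k = 0 then p.1 else p.2) 1 = p.2 := rfl
      simp only [Finset.prod_range_one, ha0, ha1, eq_self_iff_true, if_true] at this
      rw [← this]
      exact measure_mono fun ω hω => hω.2
    · rw [if_neg hp, zero_mul]
      have : C p = ∅ := by
        ext ω; simp only [hC, Set.mem_setOf_eq, Set.mem_empty_iff_false, iff_false]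
        exact fun hω => hp hω.1
      rw [this, measure_empty]
  calc P {ω | r ≤ (YN 1 ω : ℝ)} ≤ P (⋃ p, C p) := measure_mono hsub
    _ ≤ ∑' p, P (C p) := measure_iUnion_le _
    _ ≤ ∑' p : ℕ × ℕ, (if M ≤ p.2 then (1:ℝ≥0∞) else 0) *
          ((Measure.dirac (N:ℕ) : Measure ℕ) {p.1} * gwStep ν p.1 p.2) :=
      ENNReal.tsum_le_tsum hCb
    _ = ∑' (i : ℕ) (j : ℕ), (if M ≤ j then (1:ℝ≥0∞) else 0) *
          ((Measure.dirac (N:ℕ) : Measure ℕ) {i} * gwStep ν i j) := ENNReal.tsum_prod'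
    _ = ∑' j : ℕ, (if M ≤ j then (1:ℝ≥0∞) else 0) * gwStep ν N j := by
      have hcol : ∀ i : ℕ, i ≠ N → (∑' j : ℕ, (if M ≤ j then (1:ℝ≥0∞) else 0) *
          ((Measure.dirac (N:ℕ) : Measure ℕ) {i} * gwStep ν i j)) = 0 := by
        intro i hi
        have : ((Measure.dirac (N:ℕ) : Measure ℕ) {i}) = 0 := by
          rw [Measure.dirac_apply]; simp [Set.indicator, Ne.symm hi]
        simp [this]
      rw [tsum_eq_single N hcol]
      have : ((Measure.dirac (N:ℕ) : Measure ℕ) {(N:ℕ)}) = 1 := by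
        rw [Measure.dirac_apply]; simp
      simp [this]
    _ = ∑' j, if M ≤ j then convPow ν N {j} else 0 := by
      refine tsum_congr fun j => ?_
      rw [gwStep, if_neg (by omega : ¬ N = 0)]
      by_cases hj : M ≤ j <;> simp [hj]

theorem gw_local_survival_criterion' {Ω Ω' : Type*} [MeasurableSpace Ω] [MeasurableSpace Ω']
    (P : Measure Ω) (P' : Measure Ω') [IsProbabilityMeasure P] [IsProbabilityMeasure P']
    (ν : Measure ℕ) [IsProbabilityMeasure ν]
    (a : ℝ) (ha : 0 < a) (N : ℕ) (hN : 1 ≤ N)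
    (YN : ℕ → Ω → ℕ) (Y' : ℕ → Ω' → ℕ)
    (hYN : IsGW P YN ν (Measure.dirac N)) (hY' : IsGW P' Y' ν (Measure.dirac 1))
    (h : 1 < a * (P {ω | a * N ≤ (YN 1 ω : ℝ)}).toReal) :
    0 < P' {ω | ∀ t : ℕ, Y' t ω ≠ 0} := by
  classical
  set M := ⌈a * N⌉₊ with hM
  haveI : IsProbabilityMeasure (convPow ν N) := convPow_prob_s7 ν N
  set pp : ℝ≥0∞ := ∑' j, if M ≤ j then convPow ν N {j} else 0 with hpp
  have hpp1 : pp ≤ 1 := by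
    calc pp ≤ ∑' j, convPow ν N {j} :=
        ENNReal.tsum_le_tsum (fun j => by by_cases hj : M ≤ j <;> simp [hj])
      _ = 1 := by rw [tsum_singleton_eq, measure_univ]
  have hppfin : pp ≠ ⊤ := (lt_of_le_of_lt hpp1 ENNReal.one_lt_top).ne
  have hPS : P {ω | a * N ≤ (YN 1 ω : ℝ)} ≤ pp := event_bound P YN ν N hN hYN (a * N)
  have hpr : 1 < a * pp.toReal :=
    lt_of_lt_of_le h (mul_le_mul_of_nonneg_left (ENNReal.toReal_mono hppfin hPS) ha.le)
  have hprpos : 0 < pp.toReal := by nlinarith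
  have hMr : (a * N : ℝ) ≤ M := Nat.le_ceil _
  have hNpos : (0:ℝ) < N := by exact_mod_cast hN
  have hNp : (N : ℝ) < pp.toReal * M := by
    calc (N:ℝ) = 1 * N := (one_mul _).symm
      _ < (a * pp.toReal) * N := mul_lt_mul_of_pos_right hpr hNpos
      _ = pp.toReal * (a * N) := by ring
      _ ≤ pp.toReal * M := mul_le_mul_of_nonneg_left hMr hprpos.le
  have hbound : ∀ s : ℝ≥0∞, s ≤ 1 → (pgf ν s) ^ N ≤ (1 - pp) + pp * s ^ M := by
    intro s hs
    rw [← pgf_convPow]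
    exact pgf_trunc (convPow ν N) M hs
  obtain ⟨s₀, hs₀1, hs₀fix⟩ := exists_subfixed ν N M hN pp hpp1 hbound hNp
  have hq : ∀ n, qseq ν n ≤ s₀ := qseq_le_subfixed ν hs₀fix
  set B : ℕ → Set Ω' := fun t => {ω | ∃ s ≤ t, Y' s ω = 0} with hB
  have hmono : Monotone B := by
    intro t u htu ω hω
    obtain ⟨s, hs, h0⟩ := hω
    exact ⟨s, hs.trans htu, h0⟩
  have hcompl : {ω | ∀ t : ℕ, Y' t ω ≠ 0}ᶜ = ⋃ t, B t := by
    ext ω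
    simp only [Set.mem_compl_iff, Set.mem_setOf_eq, not_forall, not_not, Set.mem_iUnion, hB]
    constructor
    · rintro ⟨t, ht⟩; exact ⟨t, t, le_refl t, ht⟩
    · rintro ⟨t, s, _, hs0⟩; exact ⟨s, hs0⟩
  have hext : P' {ω | ∀ t : ℕ, Y' t ω ≠ 0}ᶜ ≤ s₀ := by
    rw [hcompl, hmono.measure_iUnion]
    exact iSup_le fun t => (hit_zero_bound P' Y' ν hY' t).trans (hq t)
  by_contra hcon
  push_neg at hcon
  have hS0 : P' {ω | ∀ t : ℕ, Y' t ω ≠ 0} = 0 := le_antisymm hcon (zero_le)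
  have hle1 : (1:ℝ≥0∞) ≤ s₀ := by
    calc (1:ℝ≥0∞) = P' Set.univ := measure_univ.symm
      _ = P' ({ω | ∀ t : ℕ, Y' t ω ≠ 0} ∪ {ω | ∀ t : ℕ, Y' t ω ≠ 0}ᶜ) := by
          rw [Set.union_compl_self]
      _ ≤ P' {ω | ∀ t : ℕ, Y' t ω ≠ 0} + P' {ω | ∀ t : ℕ, Y' t ω ≠ 0}ᶜ := measure_union_le _ _
      _ = P' {ω | ∀ t : ℕ, Y' t ω ≠ 0}ᶜ := by rw [hS0, zero_add]
      _ ≤ s₀ := hext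
  exact absurd (lt_of_le_of_lt hle1 hs₀1) (lt_irrefl _)

/-- If `a * P^N(Y 1 ≥ a N) > 1` for some `a > 0` and `N ≥ 1`, then the process
started from one individual survives with positive probability. -/
theorem gw_local_survival_criterion {Ω Ω' : Type*} [MeasurableSpace Ω] [MeasurableSpace Ω']
    (P : Measure Ω) (P' : Measure Ω') [IsProbabilityMeasure P] [IsProbabilityMeasure P']
    (ν : Measure ℕ) [IsProbabilityMeasure ν]
    (a : ℝ) (ha : 0 < a) (N : ℕ) (hN : 1 ≤ N)
    (YN : ℕ → Ω → ℕ) (Y' : ℕ → Ω' → ℕ)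
    (hYN : IsGW P YN ν (Measure.dirac N)) (hY' : IsGW P' Y' ν (Measure.dirac 1))
    (h : 1 < a * (P {ω | a * N ≤ (YN 1 ω : ℝ)}).toReal) :
    0 < P' {ω | ∀ t : ℕ, Y' t ω ≠ 0} := by
  exact gw_local_survival_criterion' P P' ν a ha N hN YN Y' hYN hY' h
end

section
/- Let (Y_n) and (Y^p_n) be as in the thinning coupling, started from the same initial state N. Then for any T, M ≥ 1, P(Y^p_T ≥ 2N) ≥ p^{TM} · P(max_{0 ≤ i ≤ T} Y_i ≤ M and Y_T ≥ 2N). -/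
open MeasureTheory ProbabilityTheory Filter
open scoped ENNReal

/-- The Bernoulli measure with parameter `p` on `ℕ`. -/
noncomputable def bern (p : ℝ) : Measure ℕ :=
  ENNReal.ofReal (1 - p) • Measure.dirac 0 + ENNReal.ofReal p • Measure.dirac 1

/-- Auxiliary: a random sum of measurable `ℕ`-valued functions is measurable
with respect to any σ-algebra making all the summands and the random index
measurable. -/
lemma measurable_randomSum {Ω : Type*} {m' : MeasurableSpace Ω}
    {g : Ω → ℕ} {f : ℕ → Ω → ℕ} (hg : Measurable[m'] g)
    (hf : ∀ i, Measurable[m'] (f i)) :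
    Measurable[m'] (fun ω => ∑ i ∈ Finset.range (g ω), f i ω) := by
  apply measurable_to_countable'
  intro k
  have : (fun ω => ∑ i ∈ Finset.range (g ω), f i ω) ⁻¹' {k} =
      ⋃ m : ℕ, ({ω | g ω = m} ∩ {ω | (∑ i ∈ Finset.range m, f i ω) = k}) := by
    ext ω
    simp only [Set.mem_preimage, Set.mem_singleton_iff, Set.mem_iUnion, Set.mem_inter_iff,
      Set.mem_setOf_eq]
    constructor
    · intro h; exact ⟨g ω, rfl, h⟩
    · rintro ⟨m, hm, hk⟩; rw [hm]; exact hk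
  rw [this]
  refine MeasurableSet.iUnion fun m => (hg (measurableSet_singleton m)).inter ?_
  exact (Finset.measurable_sum _ fun i _ => hf i) (measurableSet_singleton k)

/-- Coupling inequality between a Galton–Watson process and its `p`-thinning:
`P(Yp T ≥ 2 N) ≥ p ^ (T * M) * P(max_{i ≤ T} Y i ≤ M and Y T ≥ 2 N)`. -/
theorem gw_thinning_coupling {Ω : Type*} [MeasurableSpace Ω]
    (P : Measure Ω) [IsProbabilityMeasure P]
    (ν : Measure ℕ) [IsProbabilityMeasure ν] (p : ℝ) (hp0 : 0 ≤ p) (hp1 : p ≤ 1)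
    (X B : ℕ → ℕ → Ω → ℕ)
    (hmX : ∀ n i, Measurable (X n i)) (hmB : ∀ n i, Measurable (B n i))
    (hlawX : ∀ n i, Measure.map (X n i) P = ν)
    (hlawB : ∀ n i, Measure.map (B n i) P = bern p)
    (hindep : iIndepFun
      (Sum.elim (fun q : ℕ × ℕ => X q.1 q.2) (fun q : ℕ × ℕ => B q.1 q.2)) P)
    (N : ℕ) (Y Yp : ℕ → Ω → ℕ)
    (hY0 : ∀ ω, Y 0 ω = N) (hYp0 : ∀ ω, Yp 0 ω = N)
    (hYrec : ∀ n ω, Y (n + 1) ω = ∑ i ∈ Finset.range (Y n ω), X n i ω)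
    (hYprec : ∀ n ω, Yp (n + 1) ω = ∑ i ∈ Finset.range (Yp n ω), B n i ω * X n i ω)
    (T M : ℕ) (hT : 1 ≤ T) (hM : 1 ≤ M) :
    ENNReal.ofReal (p ^ (T * M)) * P {ω | (∀ i ≤ T, Y i ω ≤ M) ∧ 2 * N ≤ Y T ω} ≤
      P {ω | 2 * N ≤ Yp T ω} := by
  classical
  set F : (ℕ × ℕ) ⊕ (ℕ × ℕ) → Ω → ℕ :=
    Sum.elim (fun q => X q.1 q.2) (fun q => B q.1 q.2) with hF
  set m : (ℕ × ℕ) ⊕ (ℕ × ℕ) → MeasurableSpace Ω :=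
    fun j => (inferInstance : MeasurableSpace ℕ).comap (F j) with hm
  have h_le : ∀ j, m j ≤ ‹MeasurableSpace Ω› := by
    rintro (q | q) <;> simp only [hm, hF, Sum.elim_inl, Sum.elim_inr]
    · exact (hmX q.1 q.2).comap_le
    · exact (hmB q.1 q.2).comap_le
  have hiIndep : iIndep m P := hindep.iIndep
  set s : Finset (ℕ × ℕ) := Finset.range T ×ˢ Finset.range M with hs
  set E : Set Ω := ⋂ q ∈ s, B q.1 q.2 ⁻¹' {1} with hE
  -- probability of E
  have hB1 : ∀ q : ℕ × ℕ, P (B q.1 q.2 ⁻¹' {1}) = ENNReal.ofReal p := by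
    intro q
    have := hlawB q.1 q.2
    have h1 : P (B q.1 q.2 ⁻¹' {1}) = Measure.map (B q.1 q.2) P {1} := by
      rw [Measure.map_apply (hmB q.1 q.2) (measurableSet_singleton 1)]
    rw [h1, this, bern]
    simp [Measure.dirac_apply]
  have hPE : P E = ENNReal.ofReal (p ^ (T * M)) := by
    have hinj : Function.Injective (Sum.inr : ℕ × ℕ → (ℕ × ℕ) ⊕ (ℕ × ℕ)) := Sum.inr_injective
    set σ : (ℕ × ℕ) ⊕ (ℕ × ℕ) → Set Ω :=
      Sum.elim (fun _ => Set.univ) (fun q => B q.1 q.2 ⁻¹' {1}) with hσ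
    have hmeas : ∀ j ∈ s.image Sum.inr,
        MeasurableSet[(inferInstance : MeasurableSpace ℕ).comap (F j)] (σ j) := by
      intro j hj
      simp only [Finset.mem_image] at hj
      obtain ⟨q, hq, rfl⟩ := hj
      exact ⟨{1}, measurableSet_singleton 1, rfl⟩
    have := hindep.meas_biInter (S := s.image Sum.inr) (s := σ) hmeas
    have hEeq : (⋂ j ∈ s.image Sum.inr, σ j) = E := by
      ext ω
      simp only [hE, hσ, Set.mem_iInter, Finset.mem_image, Sum.elim_inr]
      constructor
      · intro h q hq
        exact h (Sum.inr q) ⟨q, hq, rfl⟩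
      · rintro h j ⟨q, hq, rfl⟩
        exact h q hq
    rw [hEeq] at this
    rw [this, Finset.prod_image (fun a _ b _ h => hinj h)]
    have : ∀ q ∈ s, P (σ (Sum.inr q)) = ENNReal.ofReal p := fun q _ => hB1 q
    rw [Finset.prod_congr rfl this, Finset.prod_const]
    rw [hs, Finset.card_product, Finset.card_range, Finset.card_range,
      ← ENNReal.ofReal_pow hp0]
  set mX : MeasurableSpace Ω := ⨆ j ∈ Set.range (Sum.inl : ℕ × ℕ → (ℕ × ℕ) ⊕ (ℕ × ℕ)), m j
  set mB : MeasurableSpace Ω := ⨆ j ∈ Set.range (Sum.inr : ℕ × ℕ → (ℕ × ℕ) ⊕ (ℕ × ℕ)), m j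
  have hIndep : Indep mX mB P :=
    indep_iSup_of_disjoint h_le hiIndep (Set.disjoint_left.2 (by rintro _ ⟨q, rfl⟩ ⟨q', h⟩; simp at h))
  -- X's are mX-measurable
  have hXmX : ∀ n i, Measurable[mX] (X n i) := by
    intro n i
    have h1 : m (Sum.inl (n, i)) ≤ mX := le_biSup m ⟨(n, i), rfl⟩
    intro s hs
    exact h1 _ ⟨s, hs, rfl⟩
  -- Y's are mX-measurable
  have hYmX : ∀ n, Measurable[mX] (Y n) := by
    intro n
    induction n with
    | zero =>
      have : Y 0 = fun _ => N := funext hY0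
      rw [this]; exact measurable_const
    | succ n ih =>
      have : Y (n + 1) = fun ω => ∑ i ∈ Finset.range (Y n ω), X n i ω := funext (hYrec n)
      rw [this]
      exact measurable_randomSum ih (fun i => hXmX n i)
  set A : Set Ω := {ω | (∀ i ≤ T, Y i ω ≤ M) ∧ 2 * N ≤ Y T ω} with hA
  have hAmX : MeasurableSet[mX] A := by
    have : A = (⋂ i, ⋂ _ : i ≤ T, Y i ⁻¹' Set.Iic M) ∩ Y T ⁻¹' Set.Ici (2 * N) := by
      ext ω; simp [hA, Set.mem_iInter]
    rw [this]
    exact (MeasurableSet.iInter fun i => MeasurableSet.iInter fun _ =>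
      hYmX i measurableSet_Iic).inter (hYmX T measurableSet_Ici)
  have hEmB : MeasurableSet[mB] E := by
    refine MeasurableSet.biInter s.countable_toSet fun q _ => ?_
    have h1 : m (Sum.inr q) ≤ mB := le_biSup m ⟨q, rfl⟩
    exact h1 _ ⟨{1}, measurableSet_singleton 1, rfl⟩
  -- coupling on A ∩ E
  have hcouple : ∀ ω ∈ A ∩ E, ∀ n ≤ T, Yp n ω = Y n ω := by
    rintro ω ⟨hωA, hωE⟩ n hn
    induction n with
    | zero => rw [hYp0, hY0]
    | succ n ih =>
      have hnT : n < T := hn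
      have ihn := ih (le_of_lt hnT)
      rw [hYprec n ω, hYrec n ω, ihn]
      refine Finset.sum_congr rfl fun i hi => ?_
      have hiM : i < M := lt_of_lt_of_le (Finset.mem_range.1 hi) (hωA.1 n (le_of_lt hnT))
      have hqmem : (n, i) ∈ s := by
        simp [hs, Finset.mem_product, hnT, hiM]
      have hB : B n i ω = 1 := by
        have := Set.mem_iInter₂.1 hωE (n, i) hqmem
        simpa using this
      rw [hB, one_mul]
  have hsub : A ∩ E ⊆ {ω | 2 * N ≤ Yp T ω} := by
    intro ω hω
    have := hcouple ω hω T le_rfl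
    simp only [Set.mem_setOf_eq, this]
    exact hω.1.2
  have hmul : P (A ∩ E) = P A * P E := by
    have := (Indep_iff mX mB P).1 hIndep A E hAmX hEmB
    exact this
  calc ENNReal.ofReal (p ^ (T * M)) * P A = P A * P E := by rw [hPE, mul_comm]
    _ = P (A ∩ E) := hmul.symm
    _ ≤ P {ω | 2 * N ≤ Yp T ω} := measure_mono hsub
end
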